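/- arXiv:2605.31496 — 2 statements merged into one kernel-verified Lean document; each statement's English description precedes it below -/
import Mathlib

section
/- Let r ≥ 1 be an integer, let a = (a_1,…,a_r) ∈ [0,1]^r, extended by a_0 := 0 and a_m := 1 for m > r, and let 0 ≤ k ≤ r. Set A_{k,r}^{(a)} := −a_k² − (1/2)∑_{j=1}^{r} (a_{j+k} − a_j)² − (1/4)∑_{j=1}^{k−1} (a_{k−j} − a_j)². Then for every x ∈ ℝ: ∫_{−1}^{1} T_k(y)·S_r^{(a)}(x,y)² dμ(y) − M_r^{(a)}(x)·T_k(x) = A_{k,r}^{(a)}·T_k(x) − (1/2)∑_{j=1}^{r} (a_{j+k} − a_j)²·T_{2j+k}(x) − (1/4)∑_{j=1}^{k−1} (a_{k−j} − a_j)²·T_{|2j−k|}(x). -/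
open Polynomial MeasureTheory

/-- The k-th Chebyshev polynomial of the first kind over ℝ. -/
noncomputable def chebT (k : ℕ) : Polynomial ℝ := Polynomial.Chebyshev.T ℝ (k : ℤ)

/-- The Chebyshev probability measure on `[-1,1]`, `dμ(y) = dy/(π √(1-y²))`. -/
noncomputable def chebMeasure : Measure ℝ :=
  (volume.restrict (Set.Icc (-1 : ℝ) 1)).withDensity
    (fun y => ENNReal.ofReal (1 / (Real.pi * Real.sqrt (1 - y ^ 2))))

/-- The kernel `S_r^{(a)}(x,y) = 1 + 2∑_{j=1}^r (1-a_j) T_j(x) T_j(y)`. -/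
noncomputable def Sker (r : ℕ) (a : ℕ → ℝ) (x y : ℝ) : ℝ :=
  1 + 2 * ∑ j ∈ Finset.Icc 1 r, (1 - a j) * (chebT j).eval x * (chebT j).eval y

/-- `M_r^{(a)}(x) = 1 + 2∑_{j=1}^r (1-a_j)² T_j(x)²`. -/
noncomputable def Mfun (r : ℕ) (a : ℕ → ℝ) (x : ℝ) : ℝ :=
  1 + 2 * ∑ j ∈ Finset.Icc 1 r, (1 - a j) ^ 2 * (chebT j).eval x ^ 2


open Real Set
open scoped NNReal ENNReal

private noncomputable def dens (y : ℝ) : ℝ := 1 / (Real.pi * Real.sqrt (1 - y ^ 2))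

private lemma dens_nonneg (y : ℝ) : 0 ≤ dens y := by
  unfold dens; positivity

private lemma dens_meas : Measurable dens := by
  unfold dens; fun_prop

private lemma cheb_integral (g : ℝ → ℝ) :
    ∫ y, g y ∂chebMeasure = ∫ y in Set.Ioo (-1 : ℝ) 1, dens y * g y := by
  have h1 : (fun y => ENNReal.ofReal (1 / (Real.pi * Real.sqrt (1 - y ^ 2))))
      = fun y => ((Real.toNNReal (dens y) : ℝ≥0) : ℝ≥0∞) := rfl
  rw [chebMeasure, h1, integral_withDensity_eq_integral_smul (dens_meas.real_toNNReal) g]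
  have h2 : ∀ y, (Real.toNNReal (dens y) : ℝ≥0) • g y = dens y * g y := by
    intro y
    rw [NNReal.smul_def, Real.coe_toNNReal _ (dens_nonneg y), smul_eq_mul]
  simp_rw [h2]
  rw [← Measure.restrict_congr_set MeasureTheory.Ioo_ae_eq_Icc]

private lemma cheb_integrand_eq (p : Polynomial ℝ) : ∀ θ ∈ Set.Ioo 0 π,
    Real.sin θ * (dens (Real.cos θ) * p.eval (Real.cos θ)) = (1 / π) * p.eval (Real.cos θ) := by
  intro θ hθ
  have hs : 0 < Real.sin θ := Real.sin_pos_of_pos_of_lt_pi hθ.1 hθ.2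
  have hsq : Real.sqrt (1 - Real.cos θ ^ 2) = Real.sin θ := by
    rw [show (1 : ℝ) - Real.cos θ ^ 2 = Real.sin θ ^ 2 by rw [Real.sin_sq],
      Real.sqrt_sq hs.le]
  unfold dens
  rw [hsq]
  field_simp
private lemma cheb_image : Real.cos '' Set.Ioo 0 π = Set.Ioo (-1 : ℝ) 1 := by
  ext y
  constructor
  · rintro ⟨θ, ⟨h0, hπ⟩, rfl⟩
    constructor
    · have := Real.strictAntiOn_cos ⟨le_of_lt h0, le_of_lt hπ⟩
        ⟨le_of_lt (h0.trans hπ), le_refl _⟩ hπ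
      simpa [Real.cos_pi] using this
    · have := Real.strictAntiOn_cos ⟨le_refl _, Real.pi_pos.le⟩
        ⟨le_of_lt h0, le_of_lt hπ⟩ h0
      simpa [Real.cos_zero] using this
  · rintro ⟨h1, h2⟩
    have hlt : Real.arccos y < π := by
      rw [Real.arccos]
      have := Real.neg_pi_div_two_lt_arcsin.2 h1
      linarith
    exact ⟨Real.arccos y, ⟨(Real.arccos_pos).2 h2, hlt⟩, Real.cos_arccos h1.le h2.le⟩

private lemma cheb_injOn : Set.InjOn Real.cos (Set.Ioo 0 π) :=
  Real.injOn_cos.mono (Set.Ioo_subset_Icc_self)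

private lemma cheb_deriv : ∀ θ ∈ Set.Ioo 0 π,
    HasDerivWithinAt Real.cos (-Real.sin θ) (Set.Ioo 0 π) θ :=
  fun θ _ => (Real.hasDerivAt_cos θ).hasDerivWithinAt

/-- transfer of set integral -/
private lemma cheb_cov (g : ℝ → ℝ) :
    ∫ y in Set.Ioo (-1 : ℝ) 1, g y = ∫ θ in Set.Ioo 0 π, Real.sin θ * g (Real.cos θ) := by
  rw [← cheb_image,
    integral_image_eq_integral_abs_deriv_smul measurableSet_Ioo cheb_deriv cheb_injOn g]
  refine setIntegral_congr_fun measurableSet_Ioo (fun θ hθ => ?_)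
  have : |(-Real.sin θ)| = Real.sin θ := by
    rw [abs_neg, abs_of_nonneg (Real.sin_nonneg_of_nonneg_of_le_pi hθ.1.le hθ.2.le)]
  simp [this]

private lemma cheb_cov_int (g : ℝ → ℝ) :
    IntegrableOn g (Set.Ioo (-1 : ℝ) 1) ↔
      IntegrableOn (fun θ => Real.sin θ * g (Real.cos θ)) (Set.Ioo 0 π) := by
  rw [← cheb_image,
    integrableOn_image_iff_integrableOn_abs_deriv_smul measurableSet_Ioo cheb_deriv cheb_injOn g]
  refine integrableOn_congr_fun (fun θ hθ => ?_) measurableSet_Ioo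
  have : |(-Real.sin θ)| = Real.sin θ := by
    rw [abs_neg, abs_of_nonneg (Real.sin_nonneg_of_nonneg_of_le_pi hθ.1.le hθ.2.le)]
  simp [this]
private lemma cheb_integral_poly (p : Polynomial ℝ) :
    ∫ y, p.eval y ∂chebMeasure = (1 / π) * ∫ θ in (0:ℝ)..π, p.eval (Real.cos θ) := by
  rw [cheb_integral, cheb_cov (fun y => dens y * p.eval y),
    setIntegral_congr_fun measurableSet_Ioo (cheb_integrand_eq p),
    MeasureTheory.integral_const_mul, ← integral_Ioc_eq_integral_Ioo,
    ← intervalIntegral.integral_of_le Real.pi_pos.le]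

private lemma integrable_cheb_poly (p : Polynomial ℝ) :
    Integrable (fun y => p.eval y) chebMeasure := by
  rw [show chebMeasure = (volume.restrict (Set.Icc (-1:ℝ) 1)).withDensity (fun y => ENNReal.ofReal (dens y)) from rfl,
    integrable_withDensity_iff (dens_meas.ennreal_ofReal)
    (Filter.Eventually.of_forall (fun y => ENNReal.ofReal_lt_top))]
  simp_rw [ENNReal.toReal_ofReal (dens_nonneg _)]
  have heq : (fun y => p.eval y * dens y) = fun y => dens y * p.eval y := by
    funext y; ring
  rw [heq]
  have : IntegrableOn (fun y => dens y * p.eval y) (Set.Ioo (-1 : ℝ) 1) := by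
    rw [cheb_cov_int]
    have : IntegrableOn (fun θ => (1 / π) * p.eval (Real.cos θ)) (Set.Ioo 0 π) := by
      apply ((Continuous.integrableOn_Icc (continuous_const.mul (p.continuous_aeval.comp Real.continuous_cos))).mono_set Set.Ioo_subset_Icc_self)
    exact this.congr_fun (fun θ hθ => (cheb_integrand_eq p θ hθ).symm) measurableSet_Ioo
  exact this.congr_set_ae MeasureTheory.Ioo_ae_eq_Icc.symm

lemma integral_chebT (n : ℤ) :
    ∫ y, (Polynomial.Chebyshev.T ℝ n).eval y ∂chebMeasure = if n = 0 then 1 else 0 := by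
  rw [cheb_integral_poly]
  simp_rw [Polynomial.Chebyshev.T_real_cos]
  rcases eq_or_ne n 0 with rfl | hn
  · simp [Real.pi_ne_zero]
  · rw [if_neg hn]
    have hc : (n : ℝ) ≠ 0 := Int.cast_ne_zero.2 hn
    rw [intervalIntegral.integral_comp_mul_left Real.cos hc]
    simp [integral_cos, Real.sin_int_mul_pi]
/-! ### The linear functional of integration against chebMeasure -/

private noncomputable def L (p : Polynomial ℝ) : ℝ := ∫ y, p.eval y ∂chebMeasure

private def ind (n : ℤ) : ℝ := if n = 0 then 1 else 0

private lemma L_add (p q : Polynomial ℝ) : L (p + q) = L p + L q := by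
  unfold L
  simp_rw [Polynomial.eval_add]
  exact integral_add (integrable_cheb_poly p) (integrable_cheb_poly q)

private lemma L_sum {ι : Type*} (s : Finset ι) (f : ι → Polynomial ℝ) :
    L (∑ i ∈ s, f i) = ∑ i ∈ s, L (f i) := by
  classical
  induction s using Finset.cons_induction with
  | empty => simp [L]
  | cons i s hi ih => rw [Finset.sum_cons, Finset.sum_cons, L_add, ih]

private lemma L_Cmul (c : ℝ) (p : Polynomial ℝ) : L (Polynomial.C c * p) = c * L p := by
  unfold L
  simp_rw [Polynomial.eval_mul, Polynomial.eval_C]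
  exact integral_const_mul c _

private lemma L_two (p : Polynomial ℝ) : L (2 * p) = 2 * L p := by
  rw [two_mul, L_add]; ring

private lemma L_T (n : ℤ) : L (Polynomial.Chebyshev.T ℝ n) = ind n := integral_chebT n

private lemma L_TT (m n : ℤ) :
    L (Polynomial.Chebyshev.T ℝ m * Polynomial.Chebyshev.T ℝ n)
      = (ind (m + n) + ind (m - n)) / 2 := by
  have h := Polynomial.Chebyshev.T_mul_T ℝ m n
  have h2 : L (2 * (Polynomial.Chebyshev.T ℝ m * Polynomial.Chebyshev.T ℝ n))
      = ind (m + n) + ind (m - n) := by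
    rw [show 2 * (Polynomial.Chebyshev.T ℝ m * Polynomial.Chebyshev.T ℝ n)
        = Polynomial.Chebyshev.T ℝ (m + n) + Polynomial.Chebyshev.T ℝ (m - n) by
      rw [← h]; ring, L_add, L_T, L_T]
  rw [L_two] at h2
  linarith

private lemma L_TTT (k m n : ℤ) :
    L (Polynomial.Chebyshev.T ℝ k * Polynomial.Chebyshev.T ℝ m * Polynomial.Chebyshev.T ℝ n)
      = (ind (k + m + n) + ind (k + m - n) + ind (k - m + n) + ind (k - m - n)) / 4 := by
  have h := Polynomial.Chebyshev.T_mul_T ℝ k m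
  have h2 : L (2 * (Polynomial.Chebyshev.T ℝ k * Polynomial.Chebyshev.T ℝ m
        * Polynomial.Chebyshev.T ℝ n))
      = L (Polynomial.Chebyshev.T ℝ (k + m) * Polynomial.Chebyshev.T ℝ n)
        + L (Polynomial.Chebyshev.T ℝ (k - m) * Polynomial.Chebyshev.T ℝ n) := by
    rw [← L_add]
    congr 1
    linear_combination Polynomial.Chebyshev.T ℝ n * h
  rw [L_two] at h2
  rw [L_TT, L_TT] at h2
  have e1 : k + m + n = k + m + n := rfl
  linarith [h2]
/-! ### Evaluation of the integral -/

private noncomputable def tv (x : ℝ) (n : ℤ) : ℝ := (Polynomial.Chebyshev.T ℝ n).eval x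

private lemma tv_prod (x : ℝ) (m n s d : ℤ) (hs : s = m + n) (hd : d = m - n) :
    2 * tv x m * tv x n = tv x s + tv x d := by
  subst hs hd
  have := congrArg (Polynomial.eval x) (Polynomial.Chebyshev.T_mul_T ℝ m n)
  simpa [tv, Polynomial.eval_mul, Polynomial.eval_add] using this

private lemma tv_zero (x : ℝ) : tv x 0 = 1 := by
  simp [tv, Polynomial.Chebyshev.T_zero]

private noncomputable def Sker' (r : ℕ) (a : ℕ → ℝ) (x y : ℝ) : ℝ :=
  1 + 2 * ∑ j ∈ Finset.Icc 1 r, (1 - a j) * tv x (j : ℤ) * tv y (j : ℤ)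

private lemma hint_lemma (r : ℕ) (a : ℕ → ℝ) (ha1 : ∀ m, r < m → a m = 1)
    (k : ℕ) (hk : k ≤ r) (x : ℝ) :
    ∫ y, (Polynomial.Chebyshev.T ℝ (k : ℤ)).eval y * (Sker' r a x y) ^ 2 ∂chebMeasure
      = (if k = 0 then 1 else 2 * (1 - a k) * tv x (k : ℤ))
        + 2 * ∑ j ∈ Finset.Icc 1 r,
            (1 - a j) * (1 - a (j + k)) * (tv x (j : ℤ) * tv x ((j + k : ℕ) : ℤ))
        + ∑ j ∈ Finset.Icc 1 (k - 1),
            (1 - a j) * (1 - a (k - j)) * (tv x (j : ℤ) * tv x ((k - j : ℕ) : ℤ)) := by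
  classical
  set T : ℤ → Polynomial ℝ := Polynomial.Chebyshev.T ℝ with hT
  set b : ℕ → ℝ := fun j => 2 * (1 - a j) * tv x (j : ℤ) with hb
  have hb0 : ∀ m, r < m → b m = 0 := by
    intro m hm; simp [hb, ha1 m hm]
  set Q : Polynomial ℝ := ∑ j ∈ Finset.Icc 1 r, Polynomial.C (b j) * T (j : ℤ) with hQ
  have hSker : ∀ y, Sker' r a x y = (1 + Q).eval y := by
    intro y
    simp only [Sker', hQ, Polynomial.eval_add, Polynomial.eval_one, Polynomial.eval_finset_sum,
      Polynomial.eval_mul, Polynomial.eval_C, hb, Finset.mul_sum]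
    congr 1
    refine Finset.sum_congr rfl fun j _ => ?_
    simp only [tv, hT]
    ring
  have hLrw : ∫ y, (T (k : ℤ)).eval y * (Sker' r a x y) ^ 2 ∂chebMeasure
      = L (T (k : ℤ) * (1 + Q) ^ 2) := by
    unfold L
    refine integral_congr_ae (Filter.Eventually.of_forall fun y => ?_)
    simp only [hSker, Polynomial.eval_mul, Polynomial.eval_pow]
  have hexp : T (k : ℤ) * (1 + Q) ^ 2
      = T (k : ℤ) + (∑ j ∈ Finset.Icc 1 r, Polynomial.C (b j) * (2 * (T (k : ℤ) * T (j : ℤ))))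
        + ∑ i ∈ Finset.Icc 1 r, ∑ j ∈ Finset.Icc 1 r,
            Polynomial.C (b i * b j) * (T (k : ℤ) * T (i : ℤ) * T (j : ℤ)) := by
    have h1 : ∑ j ∈ Finset.Icc 1 r, Polynomial.C (b j) * (2 * (T (k : ℤ) * T (j : ℤ)))
        = 2 * (T (k : ℤ) * Q) := by
      rw [hQ, Finset.mul_sum, Finset.mul_sum]
      refine Finset.sum_congr rfl fun j _ => by ring
    have h2 : ∑ i ∈ Finset.Icc 1 r, ∑ j ∈ Finset.Icc 1 r,
          Polynomial.C (b i * b j) * (T (k : ℤ) * T (i : ℤ) * T (j : ℤ))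
        = T (k : ℤ) * (Q * Q) := by
      rw [hQ, Finset.sum_mul_sum, Finset.mul_sum]
      refine Finset.sum_congr rfl fun i _ => ?_
      rw [Finset.mul_sum]
      refine Finset.sum_congr rfl fun j _ => ?_
      rw [map_mul]
      ring
    rw [h1, h2]
    ring
  have e2 : L (∑ j ∈ Finset.Icc 1 r, Polynomial.C (b j) * (2 * (T (k : ℤ) * T (j : ℤ))))
      = ∑ j ∈ Finset.Icc 1 r, b j * (ind ((k : ℤ) + j) + ind ((k : ℤ) - j)) := by
    rw [L_sum]
    refine Finset.sum_congr rfl fun j _ => ?_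
    rw [L_Cmul, L_two, hT, L_TT]
    ring
  have e3 : L (∑ i ∈ Finset.Icc 1 r, ∑ j ∈ Finset.Icc 1 r,
        Polynomial.C (b i * b j) * (T (k : ℤ) * T (i : ℤ) * T (j : ℤ)))
      = ∑ i ∈ Finset.Icc 1 r, ∑ j ∈ Finset.Icc 1 r, b i * b j *
          ((ind ((k : ℤ) + i + j) + ind ((k : ℤ) + i - j)
            + ind ((k : ℤ) - i + j) + ind ((k : ℤ) - i - j)) / 4) := by
    rw [L_sum]
    refine Finset.sum_congr rfl fun i _ => ?_
    rw [L_sum]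
    refine Finset.sum_congr rfl fun j _ => ?_
    rw [L_Cmul, hT, L_TTT]
  have e2' : ∑ j ∈ Finset.Icc 1 r, b j * (ind ((k : ℤ) + j) + ind ((k : ℤ) - j))
      = if k = 0 then 0 else 2 * (1 - a k) * tv x (k : ℤ) := by
    have hpt : ∀ j ∈ Finset.Icc 1 r, b j * (ind ((k : ℤ) + j) + ind ((k : ℤ) - j))
        = if j = k then b j else 0 := by
      intro j hj
      obtain ⟨hj1, hj2⟩ := Finset.mem_Icc.1 hj
      unfold ind
      rw [if_neg (by omega : ¬((k : ℤ) + (j : ℤ) = 0))]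
      by_cases h : j = k
      · rw [if_pos (by omega), if_pos h]; ring
      · rw [if_neg (by omega), if_neg h]; ring
    rw [Finset.sum_congr rfl hpt, Finset.sum_ite_eq' (Finset.Icc 1 r) k b]
    by_cases h : k = 0
    · rw [if_pos h, if_neg (by simp [Finset.mem_Icc]; omega)]
    · rw [if_neg h, if_pos (Finset.mem_Icc.2 ⟨by omega, hk⟩), hb]
  have hinner1 : ∀ i ∈ Finset.Icc 1 r, ∑ j ∈ Finset.Icc 1 r, b i * b j * ind ((k : ℤ) + i - j) / 4
      = (1 - a i) * (1 - a (i + k)) * (tv x (i : ℤ) * tv x ((i + k : ℕ) : ℤ)) := by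
    intro i hi
    obtain ⟨hi1, hi2⟩ := Finset.mem_Icc.1 hi
    have hpt : ∀ j ∈ Finset.Icc 1 r, b i * b j * ind ((k : ℤ) + i - j) / 4
        = if j = i + k then b i * b j / 4 else 0 := by
      intro j hj
      obtain ⟨hj1, hj2⟩ := Finset.mem_Icc.1 hj
      unfold ind
      by_cases h : j = i + k
      · rw [if_pos (by omega), if_pos h]; ring
      · rw [if_neg (by omega), if_neg h]; ring
    rw [Finset.sum_congr rfl hpt,
      Finset.sum_ite_eq' (Finset.Icc 1 r) (i + k) (fun j => b i * b j / 4)]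
    by_cases h : i + k ∈ Finset.Icc 1 r
    · rw [if_pos h]
      simp only [hb]
      ring
    · rw [if_neg h]
      have hrk : r < i + k := by
        rcases Finset.mem_Icc.not.1 h with h'
        omega
      rw [ha1 (i + k) hrk]
      ring
  have hinner3 : ∀ i ∈ Finset.Icc 1 r, ∑ j ∈ Finset.Icc 1 r, b i * b j * ind ((k : ℤ) - i - j) / 4
      = if i < k then (1 - a i) * (1 - a (k - i)) * (tv x (i : ℤ) * tv x ((k - i : ℕ) : ℤ))
        else 0 := by
    intro i hi
    obtain ⟨hi1, hi2⟩ := Finset.mem_Icc.1 hi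
    by_cases hik : i < k
    · have hpt : ∀ j ∈ Finset.Icc 1 r, b i * b j * ind ((k : ℤ) - i - j) / 4
          = if j = k - i then b i * b j / 4 else 0 := by
        intro j hj
        obtain ⟨hj1, hj2⟩ := Finset.mem_Icc.1 hj
        unfold ind
        by_cases h : j = k - i
        · rw [if_pos (by omega), if_pos h]; ring
        · rw [if_neg (by omega), if_neg h]; ring
      rw [Finset.sum_congr rfl hpt,
        Finset.sum_ite_eq' (Finset.Icc 1 r) (k - i) (fun j => b i * b j / 4),
        if_pos (Finset.mem_Icc.2 ⟨by omega, by omega⟩), if_pos hik]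
      simp only [hb]
      ring
    · rw [if_neg hik]
      refine Finset.sum_eq_zero fun j hj => ?_
      obtain ⟨hj1, hj2⟩ := Finset.mem_Icc.1 hj
      unfold ind
      rw [if_neg (by omega)]
      ring
  have e3' : ∑ i ∈ Finset.Icc 1 r, ∑ j ∈ Finset.Icc 1 r, b i * b j *
        ((ind ((k : ℤ) + i + j) + ind ((k : ℤ) + i - j)
          + ind ((k : ℤ) - i + j) + ind ((k : ℤ) - i - j)) / 4)
      = 2 * ∑ j ∈ Finset.Icc 1 r,
          (1 - a j) * (1 - a (j + k)) * (tv x (j : ℤ) * tv x ((j + k : ℕ) : ℤ))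
        + ∑ j ∈ Finset.Icc 1 (k - 1),
          (1 - a j) * (1 - a (k - j)) * (tv x (j : ℤ) * tv x ((k - j : ℕ) : ℤ)) := by
    have step1 : ∑ i ∈ Finset.Icc 1 r, ∑ j ∈ Finset.Icc 1 r, b i * b j *
          ((ind ((k : ℤ) + i + j) + ind ((k : ℤ) + i - j)
            + ind ((k : ℤ) - i + j) + ind ((k : ℤ) - i - j)) / 4)
        = ∑ i ∈ Finset.Icc 1 r, ∑ j ∈ Finset.Icc 1 r,
            (b i * b j * ind ((k : ℤ) + i - j) / 4
              + (b i * b j * ind ((k : ℤ) - i + j) / 4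
                + b i * b j * ind ((k : ℤ) - i - j) / 4)) := by
      refine Finset.sum_congr rfl fun i hi => Finset.sum_congr rfl fun j hj => ?_
      obtain ⟨hi1, hi2⟩ := Finset.mem_Icc.1 hi
      obtain ⟨hj1, hj2⟩ := Finset.mem_Icc.1 hj
      have h0 : ind ((k : ℤ) + i + j) = 0 := by
        unfold ind
        rw [if_neg (by omega)]
      rw [h0]
      ring
    rw [step1]
    simp only [Finset.sum_add_distrib]
    have hS1 : ∑ i ∈ Finset.Icc 1 r, ∑ j ∈ Finset.Icc 1 r, b i * b j * ind ((k : ℤ) + i - j) / 4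
        = ∑ j ∈ Finset.Icc 1 r,
            (1 - a j) * (1 - a (j + k)) * (tv x (j : ℤ) * tv x ((j + k : ℕ) : ℤ)) :=
      Finset.sum_congr rfl hinner1
    have hS2 : ∑ i ∈ Finset.Icc 1 r, ∑ j ∈ Finset.Icc 1 r, b i * b j * ind ((k : ℤ) - i + j) / 4
        = ∑ j ∈ Finset.Icc 1 r,
            (1 - a j) * (1 - a (j + k)) * (tv x (j : ℤ) * tv x ((j + k : ℕ) : ℤ)) := by
      rw [Finset.sum_comm]
      refine Finset.sum_congr rfl fun j hj => ?_
      have : ∀ i ∈ Finset.Icc 1 r, b i * b j * ind ((k : ℤ) - i + j) / 4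
          = b j * b i * ind ((k : ℤ) + j - i) / 4 := by
        intro i _
        rw [show (k : ℤ) - i + j = (k : ℤ) + j - i by ring]
        ring
      rw [Finset.sum_congr rfl this]
      exact hinner1 j hj
    have hS3 : ∑ i ∈ Finset.Icc 1 r, ∑ j ∈ Finset.Icc 1 r, b i * b j * ind ((k : ℤ) - i - j) / 4
        = ∑ j ∈ Finset.Icc 1 (k - 1),
            (1 - a j) * (1 - a (k - j)) * (tv x (j : ℤ) * tv x ((k - j : ℕ) : ℤ)) := by
      rw [Finset.sum_congr rfl hinner3]
      rw [← Finset.sum_subset (Finset.Icc_subset_Icc_right (show k - 1 ≤ r by omega))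
        (fun i hi hni => ?_)]
      · refine Finset.sum_congr rfl fun i hi => ?_
        obtain ⟨hi1, hi2⟩ := Finset.mem_Icc.1 hi
        rw [if_pos (by omega)]
      · obtain ⟨hi1, hi2⟩ := Finset.mem_Icc.1 hi
        have : ¬ i < k := by
          simp only [Finset.mem_Icc] at hni
          omega
        rw [if_neg this]
    rw [hS1, hS2, hS3]
    ring
  rw [hLrw, hexp, L_add, L_add, L_T, e2, e3, e2', e3']
  have hik : ind (k : ℤ) = if k = 0 then 1 else 0 := by
    unfold ind
    simp
  rw [hik]
  split_ifs <;> ring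
private lemma tv_neg (x : ℝ) (n : ℤ) : tv x (-n) = tv x n := by
  simp [tv, Polynomial.Chebyshev.T_neg]

/-- expansion of `∫ T_k(y) S_r^{(a)}(x,y)² dμ(y) - M_r^{(a)}(x) T_k(x)`. -/
theorem squared_kernel_expansion (r : ℕ) (hr : 1 ≤ r) (a : ℕ → ℝ) (ha0 : a 0 = 0)
    (ha : ∀ j ∈ Finset.Icc 1 r, a j ∈ Set.Icc (0 : ℝ) 1) (ha1 : ∀ m, r < m → a m = 1)
    (k : ℕ) (hk : k ≤ r) :
    ∀ x : ℝ,
      (∫ y, (chebT k).eval y * (Sker r a x y) ^ 2 ∂chebMeasure) - Mfun r a x * (chebT k).eval x =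
        (- (a k) ^ 2 - (1 / 2) * ∑ j ∈ Finset.Icc 1 r, (a (j + k) - a j) ^ 2
            - (1 / 4) * ∑ j ∈ Finset.Icc 1 (k - 1), (a (k - j) - a j) ^ 2) * (chebT k).eval x
        - (1 / 2) * ∑ j ∈ Finset.Icc 1 r, (a (j + k) - a j) ^ 2 * (chebT (2 * j + k)).eval x
        - (1 / 4) * ∑ j ∈ Finset.Icc 1 (k - 1), (a (k - j) - a j) ^ 2 *
            (chebT ((2 * (j : ℤ) - (k : ℤ)).natAbs)).eval x := by
  intro x
  classical
  have htv : ∀ n : ℤ, (Polynomial.Chebyshev.T ℝ n).eval x = tv x n := fun _ => rfl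
  have hcheb : ∀ n : ℕ, chebT n = Polynomial.Chebyshev.T ℝ (n : ℤ) := fun _ => rfl
  have hS : Sker = Sker' := rfl
  have H0 := hint_lemma r a ha1 k hk x
  have H1 : (∫ y, (Polynomial.Chebyshev.T ℝ (k : ℤ)).eval y * (Sker' r a x y) ^ 2 ∂chebMeasure)
      = (if k = 0 then 1 else 2 * (1 - a k) * tv x (k : ℤ))
        + ∑ j ∈ Finset.Icc 1 r, (1 - a j) * (1 - a (j + k))
            * (tv x (2 * (j : ℤ) + (k : ℤ)) + tv x (k : ℤ))
        + (1 / 2) * ∑ j ∈ Finset.Icc 1 (k - 1), (1 - a j) * (1 - a (k - j))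
            * (tv x (k : ℤ) + tv x (2 * (j : ℤ) - (k : ℤ))) := by
    rw [H0]
    have e1 : 2 * ∑ j ∈ Finset.Icc 1 r,
          (1 - a j) * (1 - a (j + k)) * (tv x (j : ℤ) * tv x ((j + k : ℕ) : ℤ))
        = ∑ j ∈ Finset.Icc 1 r, (1 - a j) * (1 - a (j + k))
            * (tv x (2 * (j : ℤ) + (k : ℤ)) + tv x (k : ℤ)) := by
      rw [Finset.mul_sum]
      refine Finset.sum_congr rfl fun j hj => ?_
      have hp := tv_prod x ((j + k : ℕ) : ℤ) (j : ℤ) (2 * (j : ℤ) + (k : ℤ)) (k : ℤ)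
        (by push_cast; ring) (by push_cast; ring)
      linear_combination ((1 - a j) * (1 - a (j + k))) * hp
    have e2 : ∑ j ∈ Finset.Icc 1 (k - 1),
          (1 - a j) * (1 - a (k - j)) * (tv x (j : ℤ) * tv x ((k - j : ℕ) : ℤ))
        = (1 / 2) * ∑ j ∈ Finset.Icc 1 (k - 1), (1 - a j) * (1 - a (k - j))
            * (tv x (k : ℤ) + tv x (2 * (j : ℤ) - (k : ℤ))) := by
      rw [Finset.mul_sum]
      refine Finset.sum_congr rfl fun j hj => ?_
      obtain ⟨hj1, hj2⟩ := Finset.mem_Icc.1 hj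
      have hp := tv_prod x ((k - j : ℕ) : ℤ) (j : ℤ) (k : ℤ) ((k : ℤ) - 2 * (j : ℤ))
        (by omega) (by omega)
      have hneg : tv x ((k : ℤ) - 2 * (j : ℤ)) = tv x (2 * (j : ℤ) - (k : ℤ)) := by
        rw [show (k : ℤ) - 2 * (j : ℤ) = -(2 * (j : ℤ) - (k : ℤ)) by ring, tv_neg]
      linear_combination ((1 / 2) * ((1 - a j) * (1 - a (k - j)))) * hp
        + ((1 / 2) * ((1 - a j) * (1 - a (k - j)))) * hneg
    rw [e1, e2]
  have H2 : Mfun r a x * tv x (k : ℤ)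
      = tv x (k : ℤ) + ∑ j ∈ Finset.Icc 1 r, (1 - a j) ^ 2
          * ((tv x (2 * (j : ℤ) + (k : ℤ)) + tv x (2 * (j : ℤ) - (k : ℤ))) / 2
            + tv x (k : ℤ)) := by
    have key : ∀ j ∈ Finset.Icc 1 r, 2 * ((1 - a j) ^ 2 * (tv x (j : ℤ)) ^ 2) * tv x (k : ℤ)
        = (1 - a j) ^ 2 * ((tv x (2 * (j : ℤ) + (k : ℤ)) + tv x (2 * (j : ℤ) - (k : ℤ))) / 2
            + tv x (k : ℤ)) := by
      intro j _
      have h1 := tv_prod x (j : ℤ) (j : ℤ) (2 * (j : ℤ)) 0 (by ring) (by ring)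
      have h2 := tv_prod x (2 * (j : ℤ)) (k : ℤ) (2 * (j : ℤ) + (k : ℤ))
        (2 * (j : ℤ) - (k : ℤ)) (by ring) (by ring)
      have h0 := tv_zero x
      linear_combination ((1 - a j) ^ 2 * tv x (k : ℤ)) * h1 + ((1 - a j) ^ 2 / 2) * h2
        + ((1 - a j) ^ 2 * tv x (k : ℤ)) * h0
    have hM : Mfun r a x = 1 + 2 * ∑ j ∈ Finset.Icc 1 r, (1 - a j) ^ 2 * (tv x (j : ℤ)) ^ 2 := by
      simp only [Mfun, hcheb, htv]
    rw [hM, add_mul, one_mul, mul_assoc, Finset.sum_mul, Finset.mul_sum]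
    congr 1
    rw [← Finset.sum_congr rfl key]
    refine Finset.sum_congr rfl fun j _ => by ring
  simp only [hcheb, hS, Polynomial.Chebyshev.T_natAbs, htv]
  push_cast
  rw [H1, H2]
  have hGA : ∑ j ∈ Finset.Icc 1 r, (1 - a j) * (1 - a (j + k))
        * (tv x (2 * (j : ℤ) + (k : ℤ)) + tv x (k : ℤ))
      = (∑ j ∈ Finset.Icc 1 r, (1 - a j) * (1 - a (j + k)) * tv x (2 * (j : ℤ) + (k : ℤ)))
        + (∑ j ∈ Finset.Icc 1 r, (1 - a j) * (1 - a (j + k))) * tv x (k : ℤ) := by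
    rw [Finset.sum_mul, ← Finset.sum_add_distrib]
    exact Finset.sum_congr rfl fun j _ => by ring
  have hGB : ∑ j ∈ Finset.Icc 1 (k - 1), (1 - a j) * (1 - a (k - j))
        * (tv x (k : ℤ) + tv x (2 * (j : ℤ) - (k : ℤ)))
      = (∑ j ∈ Finset.Icc 1 (k - 1), (1 - a j) * (1 - a (k - j))) * tv x (k : ℤ)
        + ∑ j ∈ Finset.Icc 1 (k - 1), (1 - a j) * (1 - a (k - j)) * tv x (2 * (j : ℤ) - (k : ℤ)) := by
    rw [Finset.sum_mul, ← Finset.sum_add_distrib]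
    exact Finset.sum_congr rfl fun j _ => by ring
  have hGC : ∑ j ∈ Finset.Icc 1 r, (1 - a j) ^ 2
        * ((tv x (2 * (j : ℤ) + (k : ℤ)) + tv x (2 * (j : ℤ) - (k : ℤ))) / 2 + tv x (k : ℤ))
      = (1 / 2) * (∑ j ∈ Finset.Icc 1 r, (1 - a j) ^ 2 * tv x (2 * (j : ℤ) + (k : ℤ)))
        + (1 / 2) * (∑ j ∈ Finset.Icc 1 r, (1 - a j) ^ 2 * tv x (2 * (j : ℤ) - (k : ℤ)))
        + (∑ j ∈ Finset.Icc 1 r, (1 - a j) ^ 2) * tv x (k : ℤ) := by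
    rw [Finset.mul_sum, Finset.mul_sum, Finset.sum_mul, ← Finset.sum_add_distrib,
      ← Finset.sum_add_distrib]
    exact Finset.sum_congr rfl fun j _ => by ring
  have hGP : ∑ j ∈ Finset.Icc 1 r, (a (j + k) - a j) ^ 2
      = (∑ j ∈ Finset.Icc 1 r, (1 - a j) ^ 2)
        - 2 * (∑ j ∈ Finset.Icc 1 r, (1 - a j) * (1 - a (j + k)))
        + ∑ j ∈ Finset.Icc 1 r, (1 - a (j + k)) ^ 2 := by
    rw [Finset.mul_sum, ← Finset.sum_sub_distrib, ← Finset.sum_add_distrib]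
    exact Finset.sum_congr rfl fun j _ => by ring
  have hGPT : ∑ j ∈ Finset.Icc 1 r, (a (j + k) - a j) ^ 2 * tv x (2 * (j : ℤ) + (k : ℤ))
      = (∑ j ∈ Finset.Icc 1 r, (1 - a j) ^ 2 * tv x (2 * (j : ℤ) + (k : ℤ)))
        - 2 * (∑ j ∈ Finset.Icc 1 r, (1 - a j) * (1 - a (j + k)) * tv x (2 * (j : ℤ) + (k : ℤ)))
        + ∑ j ∈ Finset.Icc 1 r, (1 - a (j + k)) ^ 2 * tv x (2 * (j : ℤ) + (k : ℤ)) := by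
    rw [Finset.mul_sum, ← Finset.sum_sub_distrib, ← Finset.sum_add_distrib]
    exact Finset.sum_congr rfl fun j _ => by ring
  have hGQ : ∑ j ∈ Finset.Icc 1 (k - 1), (a (k - j) - a j) ^ 2
      = (∑ j ∈ Finset.Icc 1 (k - 1), (1 - a j) ^ 2)
        - 2 * (∑ j ∈ Finset.Icc 1 (k - 1), (1 - a j) * (1 - a (k - j)))
        + ∑ j ∈ Finset.Icc 1 (k - 1), (1 - a (k - j)) ^ 2 := by
    rw [Finset.mul_sum, ← Finset.sum_sub_distrib, ← Finset.sum_add_distrib]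
    exact Finset.sum_congr rfl fun j _ => by ring
  have hGQU : ∑ j ∈ Finset.Icc 1 (k - 1), (a (k - j) - a j) ^ 2 * tv x (2 * (j : ℤ) - (k : ℤ))
      = (∑ j ∈ Finset.Icc 1 (k - 1), (1 - a j) ^ 2 * tv x (2 * (j : ℤ) - (k : ℤ)))
        - 2 * (∑ j ∈ Finset.Icc 1 (k - 1),
            (1 - a j) * (1 - a (k - j)) * tv x (2 * (j : ℤ) - (k : ℤ)))
        + ∑ j ∈ Finset.Icc 1 (k - 1), (1 - a (k - j)) ^ 2 * tv x (2 * (j : ℤ) - (k : ℤ)) := by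
    rw [Finset.mul_sum, ← Finset.sum_sub_distrib, ← Finset.sum_add_distrib]
    exact Finset.sum_congr rfl fun j _ => by ring
  rw [hGA, hGB, hGC, hGP, hGPT, hGQ, hGQU]
  rcases Nat.eq_zero_or_pos k with rfl | hkpos
  · -- case k = 0
    rw [show (0 : ℕ) - 1 = 0 from rfl, Finset.Icc_eq_empty (by omega : ¬(1 : ℕ) ≤ 0)]
    simp only [Finset.sum_empty, Nat.add_zero, Nat.cast_zero, add_zero, sub_zero, if_pos rfl,
      tv_zero, ha0, sub_self, ne_eq, OfNat.ofNat_ne_zero, not_false_iff, zero_pow, if_true,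
      mul_zero, zero_mul, mul_one, Finset.sum_const_zero, neg_zero, zero_sub, sub_zero]
    rw [show ∑ j ∈ Finset.Icc 1 r, (1 - a j) * (1 - a j) * tv x (2 * (j : ℤ))
        = ∑ j ∈ Finset.Icc 1 r, (1 - a j) ^ 2 * tv x (2 * (j : ℤ)) from
        Finset.sum_congr rfl fun j _ => by ring,
      show ∑ j ∈ Finset.Icc 1 r, (1 - a j) * (1 - a j)
        = ∑ j ∈ Finset.Icc 1 r, (1 - a j) ^ 2 from
        Finset.sum_congr rfl fun j _ => by ring]
    ring
  · -- case k ≥ 1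
    rw [if_neg (by omega : ¬ k = 0)]
    have F4 : ∑ j ∈ Finset.Icc 1 (k - 1), (1 - a (k - j)) ^ 2
        = ∑ j ∈ Finset.Icc 1 (k - 1), (1 - a j) ^ 2 := by
      refine Finset.sum_nbij' (fun j => k - j) (fun j => k - j) ?_ ?_ ?_ ?_ ?_
      · intro j hj; simp only [Finset.mem_Icc] at hj ⊢; omega
      · intro j hj; simp only [Finset.mem_Icc] at hj ⊢; omega
      · intro j hj; simp only [Finset.mem_Icc] at hj; omega
      · intro j hj; simp only [Finset.mem_Icc] at hj; omega
      · intro j hj; rfl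
    have F2 : ∑ j ∈ Finset.Icc 1 (k - 1), (1 - a (k - j)) ^ 2 * tv x (2 * (j : ℤ) - (k : ℤ))
        = ∑ j ∈ Finset.Icc 1 (k - 1), (1 - a j) ^ 2 * tv x (2 * (j : ℤ) - (k : ℤ)) := by
      refine Finset.sum_nbij' (fun j => k - j) (fun j => k - j) ?_ ?_ ?_ ?_ ?_
      · intro j hj; simp only [Finset.mem_Icc] at hj ⊢; omega
      · intro j hj; simp only [Finset.mem_Icc] at hj ⊢; omega
      · intro j hj; simp only [Finset.mem_Icc] at hj; omega
      · intro j hj; simp only [Finset.mem_Icc] at hj; omega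
      · intro j hj
        simp only [Finset.mem_Icc] at hj
        have h2 : tv x (2 * ((k - j : ℕ) : ℤ) - (k : ℤ)) = tv x (2 * (j : ℤ) - (k : ℤ)) := by
          rw [show 2 * ((k - j : ℕ) : ℤ) - (k : ℤ) = -(2 * (j : ℤ) - (k : ℤ)) from by omega,
            tv_neg]
        rw [h2]
    have F1c : ∑ j ∈ Finset.Icc (k + 1) r, (1 - a j) ^ 2 * tv x (2 * (j : ℤ) - (k : ℤ))
        = ∑ j ∈ Finset.Icc 1 r, (1 - a (j + k)) ^ 2 * tv x (2 * (j : ℤ) + (k : ℤ)) := by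
      have hzero : ∀ j ∈ Finset.Icc 1 r, j ∉ Finset.Icc 1 (r - k) →
          (1 - a (j + k)) ^ 2 * tv x (2 * (j : ℤ) + (k : ℤ)) = 0 := by
        intro j hj hnj
        simp only [Finset.mem_Icc] at hj hnj
        rw [ha1 (j + k) (by omega)]
        ring
      rw [← Finset.sum_subset (Finset.Icc_subset_Icc_right (by omega : r - k ≤ r)) hzero]
      refine Finset.sum_nbij' (fun j => j - k) (fun j => j + k) ?_ ?_ ?_ ?_ ?_
      · intro j hj; simp only [Finset.mem_Icc] at hj ⊢; omega
      · intro j hj; simp only [Finset.mem_Icc] at hj ⊢; omega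
      · intro j hj; simp only [Finset.mem_Icc] at hj; omega
      · intro j hj; simp only [Finset.mem_Icc] at hj; omega
      · intro j hj
        simp only [Finset.mem_Icc] at hj
        rw [show j - k + k = j from by omega,
          show 2 * ((j - k : ℕ) : ℤ) + (k : ℤ) = 2 * (j : ℤ) - (k : ℤ) from by omega]
    have eIcc1k : Finset.Icc 1 k = Finset.Ioc 0 k := by
      ext m; simp only [Finset.mem_Icc, Finset.mem_Ioc]; omega
    have eIcc1k1 : Finset.Icc 1 (k - 1) = Finset.Ioc 0 (k - 1) := by
      ext m; simp only [Finset.mem_Icc, Finset.mem_Ioc]; omega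
    have eIcc1r : Finset.Icc 1 r = Finset.Ioc 0 r := by
      ext m; simp only [Finset.mem_Icc, Finset.mem_Ioc]; omega
    have eIcckr : Finset.Icc k r = Finset.Ioc (k - 1) r := by
      ext m; simp only [Finset.mem_Icc, Finset.mem_Ioc]; omega
    have eIcck1r : Finset.Icc (k + 1) r = Finset.Ioc k r := by
      ext m; simp only [Finset.mem_Icc, Finset.mem_Ioc]; omega
    have F1 : ∑ j ∈ Finset.Icc 1 r, (1 - a j) ^ 2 * tv x (2 * (j : ℤ) - (k : ℤ))
        = (∑ j ∈ Finset.Icc 1 (k - 1), (1 - a j) ^ 2 * tv x (2 * (j : ℤ) - (k : ℤ)))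
          + (1 - a k) ^ 2 * tv x (k : ℤ)
          + ∑ j ∈ Finset.Icc 1 r, (1 - a (j + k)) ^ 2 * tv x (2 * (j : ℤ) + (k : ℤ)) := by
      have d1 : (∑ j ∈ Finset.Icc 1 (k - 1), (1 - a j) ^ 2 * tv x (2 * (j : ℤ) - (k : ℤ)))
          + (∑ j ∈ Finset.Icc k r, (1 - a j) ^ 2 * tv x (2 * (j : ℤ) - (k : ℤ)))
          = ∑ j ∈ Finset.Icc 1 r, (1 - a j) ^ 2 * tv x (2 * (j : ℤ) - (k : ℤ)) := by
        rw [eIcc1k1, eIcckr, eIcc1r]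
        exact Finset.sum_Ioc_consecutive _ (by omega) (by omega)
      have d2 : ∑ j ∈ Finset.Icc k r, (1 - a j) ^ 2 * tv x (2 * (j : ℤ) - (k : ℤ))
          = (1 - a k) ^ 2 * tv x (2 * (k : ℤ) - (k : ℤ))
            + ∑ j ∈ Finset.Icc (k + 1) r, (1 - a j) ^ 2 * tv x (2 * (j : ℤ) - (k : ℤ)) := by
        rw [show Finset.Icc k r = insert k (Finset.Icc (k + 1) r) from by
            ext m; simp only [Finset.mem_Icc, Finset.mem_insert]; omega,
          Finset.sum_insert (by simp only [Finset.mem_Icc]; omega)]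
      have d3 : tv x (2 * (k : ℤ) - (k : ℤ)) = tv x (k : ℤ) := by
        rw [show 2 * (k : ℤ) - (k : ℤ) = (k : ℤ) from by ring]
      rw [d3] at d2
      rw [F1c] at d2
      linarith [d1, d2]
    have F3 : ∑ j ∈ Finset.Icc 1 r, (1 - a (j + k)) ^ 2
        = (∑ j ∈ Finset.Icc 1 r, (1 - a j) ^ 2) - ∑ j ∈ Finset.Icc 1 k, (1 - a j) ^ 2 := by
      have hzero : ∀ j ∈ Finset.Icc 1 r, j ∉ Finset.Icc 1 (r - k) →
          (1 - a (j + k)) ^ 2 = 0 := by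
        intro j hj hnj
        simp only [Finset.mem_Icc] at hj hnj
        rw [ha1 (j + k) (by omega)]
        ring
      have c1 : ∑ j ∈ Finset.Icc 1 r, (1 - a (j + k)) ^ 2
          = ∑ j ∈ Finset.Icc (k + 1) r, (1 - a j) ^ 2 := by
        rw [← Finset.sum_subset (Finset.Icc_subset_Icc_right (by omega : r - k ≤ r)) hzero]
        refine Finset.sum_nbij' (fun j => j + k) (fun j => j - k) ?_ ?_ ?_ ?_ ?_
        · intro j hj; simp only [Finset.mem_Icc] at hj ⊢; omega
        · intro j hj; simp only [Finset.mem_Icc] at hj ⊢; omega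
        · intro j hj; simp only [Finset.mem_Icc] at hj; omega
        · intro j hj; simp only [Finset.mem_Icc] at hj; omega
        · intro j hj; rfl
      have c3 : (∑ j ∈ Finset.Icc 1 k, (1 - a j) ^ 2)
          + ∑ j ∈ Finset.Icc (k + 1) r, (1 - a j) ^ 2
          = ∑ j ∈ Finset.Icc 1 r, (1 - a j) ^ 2 := by
        rw [eIcc1k, eIcck1r, eIcc1r]
        exact Finset.sum_Ioc_consecutive _ (by omega) (by omega)
      linarith [c1, c3]
    have F5 : ∑ j ∈ Finset.Icc 1 k, (1 - a j) ^ 2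
        = (∑ j ∈ Finset.Icc 1 (k - 1), (1 - a j) ^ 2) + (1 - a k) ^ 2 := by
      rw [show Finset.Icc 1 k = insert k (Finset.Icc 1 (k - 1)) from by
          ext m; simp only [Finset.mem_Icc, Finset.mem_insert]; omega,
        Finset.sum_insert (by simp only [Finset.mem_Icc]; omega)]
      ring
    rw [F1, F2, F3, F4, F5]
    ring
end

section
/- Let φ : ℝ → ℝ be continuous with φ(x) = 0 for x ≤ 0, φ(x) = 1 for x ≥ 1, and φ continuously differentiable on [0,1], with ‖φ'‖_∞ := sup_{t∈[0,1]} |φ'(t)| > 0. Let r ≥ 1 be an integer and set a_j := φ(j/r) for 1 ≤ j ≤ r. Suppose S_r^{(a)}(x,y) ≥ 0 for all (x,y) ∈ [−1,1]². Then for every x ∈ [−1,1], M_r^{(a)}(x) ≥ 1/2 − 2‖φ'‖_∞ + r/(3‖φ'‖_∞). -/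
open Polynomial

open Real Finset

lemma chebT_eval_cos (j : ℕ) (θ : ℝ) : (chebT j).eval (Real.cos θ) = Real.cos (j * θ) := by
  have := Polynomial.Chebyshev.T_real_cos θ (j : ℤ)
  simpa [chebT] using this

lemma chebT_eval_one (j : ℕ) : (chebT j).eval 1 = 1 := by
  have := chebT_eval_cos j 0
  simpa using this

lemma cos_mul_cos' (A B : ℝ) :
    Real.cos A * Real.cos B = (Real.cos (A - B) + Real.cos (A + B)) / 2 := by
  rw [Real.cos_sub, Real.cos_add]; ring

lemma sum_cos_eq_zero (N : ℕ) (hN : 0 < N) (m : ℤ) (hm : ¬ ((N : ℤ) ∣ m)) (c : ℝ) :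
    ∑ i ∈ Finset.range N, Real.cos (m * (2 * π * i / N) + c) = 0 := by
  set ω : ℂ := Complex.exp (((2 * π * m / N : ℝ) : ℂ) * Complex.I) with hω
  have hNR : (N : ℝ) ≠ 0 := Nat.cast_ne_zero.mpr hN.ne'
  have hNC : (N : ℂ) ≠ 0 := Nat.cast_ne_zero.mpr hN.ne'
  have hωN : ω ^ N = 1 := by
    rw [hω, ← Complex.exp_nat_mul]
    rw [show (N : ℂ) * (((2 * π * m / N : ℝ) : ℂ) * Complex.I) = (m : ℂ) * (2 * π * Complex.I) by
      push_cast; field_simp]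
    exact Complex.exp_int_mul_two_pi_mul_I m
  have hω1 : ω ≠ 1 := by
    intro h
    rw [hω, Complex.exp_eq_one_iff] at h
    obtain ⟨n, hn⟩ := h
    apply hm
    have hI : ((2 * π * m / N : ℝ) : ℂ) = ((n : ℝ) * (2 * π) : ℝ) := by
      have hIne : (Complex.I : ℂ) ≠ 0 := Complex.I_ne_zero
      apply mul_right_cancel₀ hIne
      rw [hn]; push_cast; ring
    have h2 : (2 * π * (m:ℝ) / N : ℝ) = (n : ℝ) * (2 * π) := by exact_mod_cast hI
    have h3 : 2 * π * (m:ℝ) = 2 * π * ((n:ℝ) * N) := by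
      field_simp at h2; rw [h2]; ring
    have h4 : (m : ℝ) = (n:ℝ) * N :=
      mul_left_cancel₀ (by positivity : (2 * π : ℝ) ≠ 0) h3
    have h5 : m = n * N := by exact_mod_cast h4
    exact ⟨n, by rw [h5, mul_comm]⟩
  have key : ∀ i : ℕ, Real.cos (m * (2 * π * i / N) + c)
      = (Complex.exp ((c : ℂ) * Complex.I) * ω ^ i).re := by
    intro i
    rw [hω, ← Complex.exp_nat_mul, ← Complex.exp_add]
    rw [show (c : ℂ) * Complex.I + (i : ℂ) * (((2 * π * m / N : ℝ) : ℂ) * Complex.I)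
        = ((m * (2 * π * i / N) + c : ℝ) : ℂ) * Complex.I by push_cast; field_simp; ring]
    rw [Complex.exp_ofReal_mul_I_re]
  calc ∑ i ∈ Finset.range N, Real.cos (m * (2 * π * i / N) + c)
      = ∑ i ∈ Finset.range N, (Complex.exp ((c : ℂ) * Complex.I) * ω ^ i).re := by
        exact Finset.sum_congr rfl fun i _ => key i
    _ = (Complex.exp ((c : ℂ) * Complex.I) * ∑ i ∈ Finset.range N, ω ^ i).re := by
        rw [Finset.mul_sum, Complex.re_sum]
    _ = 0 := by rw [geom_sum_eq hω1, hωN]; simp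

lemma not_cast_dvd_of_lt (N : ℕ) (m : ℤ) (hm0 : m ≠ 0) (hlt : |m| < N) : ¬ ((N : ℤ) ∣ m) := by
  intro h
  have h1 : (N : ℤ) ∣ |m| := (dvd_abs _ _).mpr h
  have h2 : (N : ℤ) ≤ |m| := Int.le_of_dvd (abs_pos.mpr hm0) h1
  omega

lemma sum_cos_mul_cos (r : ℕ) (j k : ℕ) (hj : j ∈ Finset.Icc 1 r)
    (hk : k ∈ Finset.Icc 1 r) (t : ℝ) :
    ∑ i ∈ Finset.range (2*r+1),
      Real.cos (j * (2 * π * i / (2*r+1 : ℕ))) *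
        Real.cos (k * (2 * π * i / (2*r+1 : ℕ)) + k * t)
    = if j = k then ((2*r+1 : ℕ) : ℝ) * Real.cos (j * t) / 2 else 0 := by
  obtain ⟨hj1, hjr⟩ := Finset.mem_Icc.mp hj
  obtain ⟨hk1, hkr⟩ := Finset.mem_Icc.mp hk
  set N : ℕ := 2*r+1 with hN
  have hNpos : 0 < N := by omega
  have expand : ∀ i : ℕ,
      Real.cos (j * (2 * π * i / N)) * Real.cos (k * (2 * π * i / N) + k * t)
      = (Real.cos ((((j : ℤ) - k : ℤ) : ℝ) * (2 * π * i / N) + (-(k * t)))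
         + Real.cos ((((j : ℤ) + k : ℤ) : ℝ) * (2 * π * i / N) + k * t)) / 2 := by
    intro i
    rw [cos_mul_cos']
    congr 2
    · push_cast; ring
    · push_cast; ring
  rw [Finset.sum_congr rfl fun i _ => expand i, ← Finset.sum_div, Finset.sum_add_distrib]
  by_cases hjk : j = k
  · subst hjk
    have h1 : ∀ i : ℕ, Real.cos ((((j : ℤ) - j : ℤ) : ℝ) * (2 * π * i / N) + (-(j * t)))
        = Real.cos (j * t) := by
      intro i
      rw [show (((j : ℤ) - j : ℤ) : ℝ) = 0 by push_cast; ring]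
      simp [Real.cos_neg]
    rw [Finset.sum_congr rfl fun i _ => h1 i, Finset.sum_const, Finset.card_range,
      sum_cos_eq_zero N hNpos ((j : ℤ) + j)
        (not_cast_dvd_of_lt N _ (by omega) (by rw [hN, abs_lt]; push_cast; omega)) (j * t)]
    rw [if_pos rfl]
    simp only [nsmul_eq_mul, add_zero]
  · have hmjk : ((j : ℤ) - k) ≠ 0 := by
      intro h; apply hjk; omega
    rw [sum_cos_eq_zero N hNpos ((j : ℤ) - k)
        (not_cast_dvd_of_lt N _ hmjk (by rw [hN, abs_lt]; push_cast; omega)) (-(k * t)),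
      sum_cos_eq_zero N hNpos ((j : ℤ) + k)
        (not_cast_dvd_of_lt N _ (by omega) (by rw [hN, abs_lt]; push_cast; omega)) (k * t)]
    simp [hjk]

lemma G_nonneg (r : ℕ) (c : ℕ → ℝ)
    (hK : ∀ s : ℝ, 0 ≤ 1 + 2 * ∑ j ∈ Finset.Icc 1 r, c j * Real.cos (j * s)) (t : ℝ) :
    0 ≤ 1 + 2 * ∑ j ∈ Finset.Icc 1 r, (c j) ^ 2 * Real.cos (j * t) := by
  set J := Finset.Icc 1 r with hJ
  set N : ℕ := 2*r+1 with hN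
  have hNpos : 0 < N := by omega
  set s : ℕ → ℝ := fun i => 2 * π * i / N with hs
  have horth1 : ∀ j ∈ J, ∑ i ∈ Finset.range N, Real.cos (j * s i) = 0 := by
    intro j hjm
    obtain ⟨hj1, hjr⟩ := Finset.mem_Icc.mp hjm
    have h := sum_cos_eq_zero N hNpos (j : ℤ)
      (not_cast_dvd_of_lt N _ (by omega) (by rw [hN, abs_lt]; push_cast; omega)) 0
    simpa [hs] using h
  have horth2 : ∀ k ∈ J, ∑ i ∈ Finset.range N, Real.cos (k * s i + k * t) = 0 := by
    intro k hkm
    obtain ⟨hk1, hkr⟩ := Finset.mem_Icc.mp hkm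
    have h := sum_cos_eq_zero N hNpos (k : ℤ)
      (not_cast_dvd_of_lt N _ (by omega) (by rw [hN, abs_lt]; push_cast; omega)) (k * t)
    simpa [hs] using h
  have hprod : ∀ j ∈ J, ∀ k ∈ J,
      ∑ i ∈ Finset.range N, Real.cos (j * s i) * Real.cos (k * s i + k * t)
      = if j = k then (N : ℝ) * Real.cos (j * t) / 2 else 0 := by
    intro j hjm k hkm
    have h := sum_cos_mul_cos r j k hjm hkm t
    simpa [hs, hN] using h
  have hA : 0 ≤ ∑ i ∈ Finset.range N,
      (1 + 2 * ∑ j ∈ J, c j * Real.cos (j * s i))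
      * (1 + 2 * ∑ k ∈ J, c k * Real.cos (k * s i + k * t)) := by
    apply Finset.sum_nonneg
    intro i _
    apply mul_nonneg (hK (s i))
    have h2 : (1 + 2 * ∑ k ∈ J, c k * Real.cos (k * s i + k * t))
        = 1 + 2 * ∑ k ∈ J, c k * Real.cos (k * (s i + t)) := by
      congr 1
      congr 1
      apply Finset.sum_congr rfl
      intro k _
      congr 2
      ring
    rw [h2]
    exact hK (s i + t)
  have hX : ∑ i ∈ Finset.range N, ∑ j ∈ J, c j * Real.cos (j * s i) = 0 := by
    rw [Finset.sum_comm]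
    apply Finset.sum_eq_zero
    intro j hjm
    rw [← Finset.mul_sum, horth1 j hjm, mul_zero]
  have hY : ∑ i ∈ Finset.range N, ∑ k ∈ J, c k * Real.cos (k * s i + k * t) = 0 := by
    rw [Finset.sum_comm]
    apply Finset.sum_eq_zero
    intro k hkm
    rw [← Finset.mul_sum, horth2 k hkm, mul_zero]
  have hXY : ∑ i ∈ Finset.range N, ∑ j ∈ J, ∑ k ∈ J,
      (c j * Real.cos (j * s i)) * (c k * Real.cos (k * s i + k * t))
      = ∑ j ∈ J, c j ^ 2 * ((N : ℝ) * Real.cos (j * t) / 2) := by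
    rw [Finset.sum_comm]
    apply Finset.sum_congr rfl
    intro j hjm
    rw [Finset.sum_comm]
    have hterm : ∀ k ∈ J, ∑ i ∈ Finset.range N,
        (c j * Real.cos (j * s i)) * (c k * Real.cos (k * s i + k * t))
        = if j = k then c j ^ 2 * ((N : ℝ) * Real.cos (j * t) / 2) else 0 := by
      intro k hkm
      calc ∑ i ∈ Finset.range N, (c j * Real.cos (j * s i)) * (c k * Real.cos (k * s i + k * t))
          = (c j * c k) * ∑ i ∈ Finset.range N, Real.cos (j * s i) * Real.cos (k * s i + k * t) := by
            rw [Finset.mul_sum]; exact Finset.sum_congr rfl fun i _ => by ring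
        _ = (c j * c k) * (if j = k then (N : ℝ) * Real.cos (j * t) / 2 else 0) := by
            rw [hprod j hjm k hkm]
        _ = if j = k then c j ^ 2 * ((N : ℝ) * Real.cos (j * t) / 2) else 0 := by
            split_ifs with hjk
            · subst hjk; ring
            · ring
    rw [Finset.sum_congr rfl hterm, Finset.sum_ite_eq J j
      (fun k => c j ^ 2 * ((N : ℝ) * Real.cos (j * t) / 2)), if_pos hjm]
  have hcalc : ∑ i ∈ Finset.range N,
      (1 + 2 * ∑ j ∈ J, c j * Real.cos (j * s i))
      * (1 + 2 * ∑ k ∈ J, c k * Real.cos (k * s i + k * t))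
      = (N : ℝ) * (1 + 2 * ∑ j ∈ J, c j ^ 2 * Real.cos (j * t)) := by
    have expand : ∀ i ∈ Finset.range N,
        (1 + 2 * ∑ j ∈ J, c j * Real.cos (j * s i))
        * (1 + 2 * ∑ k ∈ J, c k * Real.cos (k * s i + k * t))
        = 1 + 2 * (∑ j ∈ J, c j * Real.cos (j * s i))
          + 2 * (∑ k ∈ J, c k * Real.cos (k * s i + k * t))
          + 4 * ∑ j ∈ J, ∑ k ∈ J,
              (c j * Real.cos (j * s i)) * (c k * Real.cos (k * s i + k * t)) := by
      intro i _
      rw [← Finset.sum_mul_sum]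
      ring
    rw [Finset.sum_congr rfl expand]
    rw [Finset.sum_add_distrib, Finset.sum_add_distrib, Finset.sum_add_distrib,
      ← Finset.mul_sum, ← Finset.mul_sum, ← Finset.mul_sum,
      hX, hY, hXY, Finset.sum_const, Finset.card_range, nsmul_eq_mul, mul_one]
    rw [mul_add, mul_one, Finset.mul_sum]
    rw [show ∑ i ∈ J, 4 * (c i ^ 2 * ((N:ℝ) * Real.cos (i * t) / 2))
      = ∑ i ∈ J, (N:ℝ) * (2 * (c i ^ 2 * Real.cos (i * t)))
      from Finset.sum_congr rfl fun i _ => by ring]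
    rw [Finset.mul_sum]
    simp only [mul_zero, add_zero]
    rw [Finset.mul_sum]
  rw [hcalc] at hA
  have hNR : (0 : ℝ) < (N : ℝ) := by exact_mod_cast hNpos
  nlinarith [hA, hNR]

lemma sq_sum_lower (r : ℕ) (hr : 1 ≤ r) (L : ℝ) (hL1 : 1 ≤ L) (c : ℕ → ℝ)
    (hc : ∀ j ∈ Finset.Icc 1 r, 1 - L * j / r ≤ c j) :
    (r : ℝ) / (3 * L) - 1 ≤ ∑ j ∈ Finset.Icc 1 r, (c j) ^ 2 := by
  have hL0 : (0 : ℝ) < L := by linarith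
  have hr0 : (0 : ℝ) < r := by exact_mod_cast hr
  obtain ⟨g, hg⟩ : ∃ g : ℝ → ℝ, g = fun u => max 0 (1 - L * u / r) ^ 2 := ⟨_, rfl⟩
  have hgnn : ∀ u : ℝ, 0 ≤ g u := fun u => by rw [hg]; positivity
  have step1 : ∀ j ∈ Finset.Icc 1 r, g (j : ℝ) ≤ c j ^ 2 := by
    intro j hj
    by_cases h : 1 - L * j / r ≤ 0
    · rw [hg]; simp only [max_eq_left h]
      simpa using sq_nonneg (c j)
    · push_neg at h
      rw [hg]
      simp only [max_eq_right h.le]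
      exact pow_le_pow_left₀ h.le (hc j hj) 2
  have hanti : AntitoneOn g (Set.Icc (1 : ℝ) (1 + r)) := by
    intro u _ v _ huv
    rw [hg]
    simp only
    apply pow_le_pow_left₀ (le_max_left _ _)
    apply max_le_max le_rfl
    have : L * u / r ≤ L * v / r := by
      apply div_le_div_of_nonneg_right ?_ hr0.le
      exact mul_le_mul_of_nonneg_left huv hL0.le
    linarith
  have step3 : (∫ u in (1 : ℝ)..(1 + r), g u) ≤ ∑ j ∈ Finset.Icc 1 r, g (j : ℝ) := by
    have h := hanti.integral_le_sum
    rw [Nat.Icc_eq_range'] at *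
    calc (∫ u in (1 : ℝ)..(1 + r), g u) ≤ ∑ i ∈ Finset.range r, g (1 + i) := h
      _ = ∑ j ∈ Finset.Icc 1 r, g (j : ℝ) := by
        rw [← Finset.Ico_add_one_right_eq_Icc, Finset.sum_Ico_eq_sum_range]
        apply Finset.sum_congr (by norm_num)
        intro i _
        push_cast
        norm_num
  have step2 : ∑ j ∈ Finset.Icc 1 r, g (j : ℝ) ≤ ∑ j ∈ Finset.Icc 1 r, c j ^ 2 :=
    Finset.sum_le_sum step1
  have step4 : (r : ℝ) / (3 * L) - 1 ≤ ∫ u in (1 : ℝ)..(1 + r), g u := by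
    by_cases hLr : (r : ℝ) ≤ L
    · have h1 : (r : ℝ) / (3 * L) ≤ 1 / 3 := by
        rw [div_le_div_iff₀ (by positivity) (by norm_num)]
        linarith
      have h2 : (0 : ℝ) ≤ ∫ u in (1 : ℝ)..(1 + r), g u :=
        intervalIntegral.integral_nonneg (by linarith) (fun u _ => hgnn u)
      linarith
    · push_neg at hLr
      obtain ⟨b, hb⟩ : ∃ b : ℝ, b = (r : ℝ) / L := ⟨_, rfl⟩
      have hb1 : 1 < b := by rw [hb, lt_div_iff₀ hL0]; linarith
      have hbr : b ≤ 1 + r := by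
        rw [hb, div_le_iff₀ hL0]
        nlinarith
      have hgcont : Continuous g := by
        rw [hg]
        apply Continuous.pow
        exact continuous_const.max (by continuity)
      have hmono : (∫ u in (1 : ℝ)..b, g u) ≤ ∫ u in (1 : ℝ)..(1 + r), g u := by
        apply intervalIntegral.integral_mono_interval le_rfl hb1.le hbr
        · filter_upwards with u using hgnn u
        · exact hgcont.intervalIntegrable _ _
      have hcong : (∫ u in (1 : ℝ)..b, g u) = ∫ u in (1 : ℝ)..b, (1 - L * u / r) ^ 2 := by
        apply intervalIntegral.integral_congr
        intro u hu
        rw [Set.uIcc_of_le hb1.le] at hu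
        obtain ⟨hu1, hu2⟩ := hu
        have : 0 ≤ 1 - L * u / r := by
          rw [sub_nonneg, div_le_one hr0]
          calc L * u ≤ L * b := mul_le_mul_of_nonneg_left hu2 hL0.le
            _ = r := by rw [hb]; field_simp
        rw [hg]; simp only [max_eq_right this]
      have hFTC : (∫ u in (1 : ℝ)..b, (1 - L * u / r) ^ 2)
          = (fun u : ℝ => -((r : ℝ) / (3 * L)) * (1 - L * u / r) ^ 3) b
            - (fun u : ℝ => -((r : ℝ) / (3 * L)) * (1 - L * u / r) ^ 3) 1 := by
        refine intervalIntegral.integral_eq_sub_of_hasDerivAt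
          (f := fun u : ℝ => -((r : ℝ) / (3 * L)) * (1 - L * u / r) ^ 3)
          (f' := fun u : ℝ => (1 - L * u / r) ^ 2) ?_ ?_
        · intro x _
          have h1 : HasDerivAt (fun u : ℝ => 1 - L * u / r) (-(L / r)) x := by
            have h0 : HasDerivAt (fun u : ℝ => L * u / r) (L / r) x := by
              simpa using ((hasDerivAt_id x).const_mul L).div_const r
            simpa using h0.const_sub 1
          have h2 := (h1.pow 3).const_mul (-(r / (3 * L)))
          convert h2 using 1
          · rfl
          · rfl
          have hL' : L ≠ 0 := hL0.ne'
          have hr' : (r:ℝ) ≠ 0 := hr0.ne'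
          norm_num
          field_simp
        · have hc1 : Continuous fun u : ℝ => L * u / (r : ℝ) :=
            (continuous_const.mul continuous_id).div_const _
          exact ((continuous_const.sub hc1).pow 2).intervalIntegrable _ _
      have hLne : L ≠ 0 := hL0.ne'
      have hbval : 1 - L * b / (r : ℝ) = 0 := by
        rw [hb, mul_div_cancel₀ _ hLne, div_self hr0.ne']
        ring
      have hineq : (r : ℝ) / (3 * L) - 1 ≤ (r / (3 * L)) * (1 - L * 1 / r) ^ 3 := by
        have hident : (r : ℝ) / (3 * L) * (1 - L * 1 / r) ^ 3
            = r / (3 * L) - 1 + L * (3 * r - L) / (3 * r ^ 2) := by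
          field_simp
          ring
        have hpos : 0 ≤ L * (3 * (r : ℝ) - L) / (3 * r ^ 2) := by
          apply div_nonneg ?_ (by positivity)
          apply mul_nonneg hL0.le
          linarith
        linarith
      have hval : (∫ u in (1 : ℝ)..b, g u) = (r / (3 * L)) * (1 - L * 1 / r) ^ 3 := by
        rw [hcong, hFTC]
        simp only
        rw [hbval]
        ring
      linarith [hmono, hineq, hval]
  linarith [step2, step3, step4]

/-- The sup-norm of the derivative of `φ` on `[0,1]` (derivative taken within `[0,1]`). -/
noncomputable def phiDerivSup (φ : ℝ → ℝ) : ℝ :=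
  ⨆ t : Set.Icc (0 : ℝ) 1, |derivWithin φ (Set.Icc 0 1) t|

/-- lower bound on `M_r^{(a)}` in terms of `‖φ'‖_∞` for `a_j = φ(j/r)`. -/
theorem Mfun_lower_bound_phi (φ : ℝ → ℝ) (hcont : Continuous φ)
    (h0 : ∀ x : ℝ, x ≤ 0 → φ x = 0) (h1 : ∀ x : ℝ, 1 ≤ x → φ x = 1)
    (hC1 : ContDiffOn ℝ 1 φ (Set.Icc 0 1)) (hpos : 0 < phiDerivSup φ)
    (r : ℕ) (hr : 1 ≤ r)
    (hS : ∀ x ∈ Set.Icc (-1 : ℝ) 1, ∀ y ∈ Set.Icc (-1 : ℝ) 1,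
      0 ≤ Sker r (fun j => φ ((j : ℝ) / r)) x y) :
    ∀ x ∈ Set.Icc (-1 : ℝ) 1,
      1 / 2 - 2 * phiDerivSup φ + (r : ℝ) / (3 * phiDerivSup φ) ≤
        Mfun r (fun j => φ ((j : ℝ) / r)) x := by
  set L : ℝ := phiDerivSup φ with hL
  set c : ℕ → ℝ := fun j => 1 - φ ((j : ℝ) / r) with hcdef
  have hr0R : (0 : ℝ) < r := by exact_mod_cast hr
  -- bound on derivative
  have hdc : ContinuousOn (fun t => |derivWithin φ (Set.Icc 0 1) t|) (Set.Icc (0:ℝ) 1) :=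
    (hC1.continuousOn_derivWithin (uniqueDiffOn_Icc one_pos) le_rfl).abs
  have hbdd : BddAbove (Set.range fun t : Set.Icc (0:ℝ) 1 =>
      |derivWithin φ (Set.Icc 0 1) t|) := by
    have h := (isCompact_Icc.image_of_continuousOn hdc).bddAbove
    rwa [Set.image_eq_range] at h
  have hub : ∀ t ∈ Set.Icc (0:ℝ) 1, |derivWithin φ (Set.Icc 0 1) t| ≤ L :=
    fun t ht => le_ciSup hbdd (⟨t, ht⟩ : Set.Icc (0:ℝ) 1)
  have hLip : ∀ x ∈ Set.Icc (0:ℝ) 1, ∀ y ∈ Set.Icc (0:ℝ) 1, |φ y - φ x| ≤ L * |y - x| := by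
    intro x hx y hy
    have := Convex.norm_image_sub_le_of_norm_derivWithin_le (hC1.differentiableOn one_ne_zero)
      (fun z hz => by rw [Real.norm_eq_abs]; exact hub z hz) (convex_Icc 0 1) hx hy
    simpa [Real.norm_eq_abs] using this
  have hL1 : 1 ≤ L := by
    have h := hLip 0 ⟨le_rfl, zero_le_one⟩ 1 ⟨zero_le_one, le_rfl⟩
    rw [h1 1 le_rfl, h0 0 le_rfl] at h
    simpa using h
  have hcj : ∀ j ∈ Finset.Icc 1 r, 1 - L * j / r ≤ c j := by
    intro j hj
    obtain ⟨hj1, hjr⟩ := Finset.mem_Icc.mp hj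
    have hjr' : (j : ℝ) / r ∈ Set.Icc (0:ℝ) 1 := by
      constructor
      · positivity
      · rw [div_le_one hr0R]; exact_mod_cast hjr
    have h := hLip 0 ⟨le_rfl, zero_le_one⟩ ((j : ℝ) / r) hjr'
    rw [h0 0 le_rfl, sub_zero, sub_zero] at h
    have h2 : φ ((j : ℝ) / r) ≤ L * ((j : ℝ) / r) := by
      calc φ ((j : ℝ) / r) ≤ |φ ((j : ℝ) / r)| := le_abs_self _
        _ ≤ L * |(j : ℝ) / r| := h
        _ = L * ((j : ℝ) / r) := by rw [abs_of_nonneg hjr'.1]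
    rw [hcdef]
    simp only
    rw [mul_div_assoc]
    linarith
  -- nonnegativity of the one-variable kernel
  have hK : ∀ s : ℝ, 0 ≤ 1 + 2 * ∑ j ∈ Finset.Icc 1 r, c j * Real.cos (j * s) := by
    intro s
    have h := hS (Real.cos s) ⟨Real.neg_one_le_cos s, Real.cos_le_one s⟩ 1
      ⟨by norm_num, le_refl 1⟩
    unfold Sker at h
    have heq : ∀ j ∈ Finset.Icc 1 r,
        (1 - φ ((j : ℝ) / r)) * (chebT j).eval (Real.cos s) * (chebT j).eval 1
        = c j * Real.cos (j * s) := by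
      intro j _
      rw [chebT_eval_cos, chebT_eval_one, mul_one, hcdef]
    rw [Finset.sum_congr rfl heq] at h
    exact h
  -- main estimates
  intro x hx
  have hxθ : x = Real.cos (Real.arccos x) := (Real.cos_arccos hx.1 hx.2).symm
  set θ : ℝ := Real.arccos x with hθ
  have hG := G_nonneg r c hK (2 * θ)
  have hsum := sq_sum_lower r hr L hL1 c hcj
  have hMeq : Mfun r (fun j => φ ((j : ℝ) / r)) x
      = 1 + (∑ j ∈ Finset.Icc 1 r, c j ^ 2)
        + ∑ j ∈ Finset.Icc 1 r, c j ^ 2 * Real.cos (j * (2 * θ)) := by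
    unfold Mfun
    have heq : ∀ j ∈ Finset.Icc 1 r,
        (1 - φ ((j : ℝ) / r)) ^ 2 * (chebT j).eval x ^ 2
        = c j ^ 2 / 2 + c j ^ 2 * Real.cos (j * (2 * θ)) / 2 := by
      intro j _
      rw [hxθ, chebT_eval_cos, Real.cos_sq]
      rw [show 2 * ((j : ℝ) * θ) = (j : ℝ) * (2 * θ) by ring]
      rw [hcdef]
      ring
    rw [Finset.sum_congr rfl heq, Finset.sum_add_distrib, ← Finset.sum_div, ← Finset.sum_div]
    ring
  rw [hMeq]
  linarith [hG, hsum]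
end
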